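/- Let L>0 and let q : ℝ → ℂ be continuous and 2L-periodic. Let (a,b) ⊂ ℝ be a bounded maximal open interval of the set {λ ∈ ℝ : |tr T(λ)| > 2} (a spectral gap of the periodic problem). Then the real-analytic function F(λ) = T₁₁(λ) + T₂₁(λ) − T₁₂(λ) − T₂₂(λ) has exactly one zero in the closed interval [a,b]; that is, each closed gap contains exactly one point of the auxiliary spectrum. -/

import Mathlib

set_option autoImplicit false
set_option maxHeartbeats 1000000

/-- The coefficient matrix of the Zakharov–Shabat system with potential `q` and spectral
parameter `λ`. -/
noncomputable def zsMatrix (q : ℝ → ℂ) (l : ℂ) (x : ℝ) : Matrix (Fin 2) (Fin 2) ℂ :=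
  !![Complex.I * l, Complex.I * q x;
     -Complex.I * (starRingEnd ℂ) (q x), -Complex.I * l]

open Set Filter Topology Complex intervalIntegral ComplexConjugate


/-- If `w z ≤ w x` just to the right of `x`, the derivative at `x` is `≤ 0`. -/
lemma deriv_nonpos_of_right {w : ℝ → ℝ} {d x y : ℝ} (hxy : x < y)
    (hd : HasDerivAt w d x) (h : ∀ z ∈ Ioo x y, w z ≤ w x) : d ≤ 0 := by
  have hs : Tendsto (slope w x) (𝓝[>] x) (𝓝 d) :=
    (hasDerivAt_iff_tendsto_slope.1 hd).mono_left
      (nhdsWithin_mono x (fun z hz => ne_of_gt hz))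
  refine le_of_tendsto hs ?_
  filter_upwards [Ioo_mem_nhdsGT_of_mem ⟨le_refl x, hxy⟩] with z hz
  have : w z - w x ≤ 0 := sub_nonpos.2 (h z hz)
  have hz' : 0 < z - x := sub_pos.2 hz.1
  rw [slope_def_field]
  exact div_nonpos_of_nonpos_of_nonneg this hz'.le

lemma deriv_nonneg_of_right {w : ℝ → ℝ} {d x y : ℝ} (hxy : x < y)
    (hd : HasDerivAt w d x) (h : ∀ z ∈ Ioo x y, w x ≤ w z) : 0 ≤ d := by
  have := deriv_nonpos_of_right hxy hd.neg (fun z hz => neg_le_neg (h z hz))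
  linarith

lemma deriv_nonpos_of_left {w : ℝ → ℝ} {d x y : ℝ} (hxy : y < x)
    (hd : HasDerivAt w d x) (h : ∀ z ∈ Ioo y x, w x ≤ w z) : d ≤ 0 := by
  have hs : Tendsto (slope w x) (𝓝[<] x) (𝓝 d) :=
    (hasDerivAt_iff_tendsto_slope.1 hd).mono_left
      (nhdsWithin_mono x (fun z hz => ne_of_lt hz))
  refine le_of_tendsto hs ?_
  filter_upwards [Ioo_mem_nhdsLT_of_mem ⟨hxy, le_refl x⟩] with z hz
  have h1 : 0 ≤ w z - w x := sub_nonneg.2 (h z hz)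
  have hz' : z - x < 0 := sub_neg.2 hz.2
  rw [slope_def_field]
  exact div_nonpos_of_nonneg_of_nonpos h1 hz'.le

lemma deriv_nonneg_of_left {w : ℝ → ℝ} {d x y : ℝ} (hxy : y < x)
    (hd : HasDerivAt w d x) (h : ∀ z ∈ Ioo y x, w z ≤ w x) : 0 ≤ d := by
  have := deriv_nonpos_of_left hxy hd.neg (fun z hz => neg_le_neg (h z hz))
  linarith

/-- Core lemma: a continuous function that is `≥ 0` at the left end and has strictly
positive derivative at each of its zeros stays strictly positive after the left end. -/
lemma pos_of_deriv_pos_at_zeros {w : ℝ → ℝ} {s t : ℝ}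
    (hw : ContinuousOn w (Icc s t))
    (hz : ∀ x ∈ Icc s t, w x = 0 → ∃ d, HasDerivAt w d x ∧ 0 < d)
    (hs : 0 ≤ w s) : ∀ y ∈ Ioc s t, 0 < w y := by
  have core : ∀ y ∈ Ioc s t, ¬ w y < 0 := by
    intro y hy hneg
    have hsy : s < y := hy.1
    have hIccsub : Icc s y ⊆ Icc s t := Icc_subset_Icc le_rfl hy.2
    have hwsy : ContinuousOn w (Icc s y) := hw.mono hIccsub
    set Z : Set ℝ := {x ∈ Icc s y | w x = 0} with hZdef
    have hZne : Z.Nonempty := by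
      rcases eq_or_lt_of_le hs with h0 | h0
      · exact ⟨s, ⟨le_rfl, hsy.le⟩, h0.symm⟩
      · have : (0:ℝ) ∈ Icc (w y) (w s) := ⟨hneg.le, h0.le⟩
        obtain ⟨z, hz1, hz2⟩ := intermediate_value_Icc' hsy.le hwsy this
        exact ⟨z, hz1, hz2⟩
    have hZclosed : IsClosed Z := by
      have : Z = Icc s y ∩ w ⁻¹' {0} := by
        ext x; simp [hZdef, Set.mem_inter_iff]
      rw [this]
      exact hwsy.preimage_isClosed_of_isClosed isClosed_Icc isClosed_singleton
    have hZcompact : IsCompact Z :=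
      isCompact_Icc.of_isClosed_subset hZclosed (fun x hx => hx.1)
    obtain ⟨hlmem, hlzero⟩ := hZcompact.sSup_mem hZne
    set l := sSup Z
    have hly : l < y := lt_of_le_of_ne hlmem.2 (fun h => by rw [h] at hlzero; linarith)
    have hneg' : ∀ z ∈ Ioo l y, w z < 0 := by
      intro z hz'
      have hzIcc : z ∈ Icc s y := ⟨le_trans hlmem.1 hz'.1.le, hz'.2.le⟩
      have hzne : w z ≠ 0 := by
        intro h0
        have : z ≤ l := le_csSup hZcompact.bddAbove ⟨hzIcc, h0⟩
        linarith [hz'.1]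
      rcases lt_or_gt_of_ne hzne with h | h
      · exact h
      · exfalso
        have : (0:ℝ) ∈ Icc (w y) (w z) := ⟨hneg.le, h.le⟩
        obtain ⟨u, hu1, hu2⟩ := intermediate_value_Icc' hz'.2.le
          (hwsy.mono (Icc_subset_Icc hzIcc.1 le_rfl)) this
        have : u ≤ l := le_csSup hZcompact.bddAbove
          ⟨⟨le_trans hzIcc.1 hu1.1, hu1.2⟩, hu2⟩
        linarith [hz'.1, hu1.1]
    obtain ⟨d, hd, hdpos⟩ := hz l (hIccsub hlmem) hlzero
    have : d ≤ 0 := by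
      apply deriv_nonpos_of_right hly hd
      intro z hz'
      rw [hlzero]
      exact (hneg' z hz').le
    linarith
  intro y hy
  rcases lt_trichotomy (w y) 0 with h | h | h
  · exact absurd h (core y hy)
  · exfalso
    obtain ⟨d, hd, hdpos⟩ := hz y (Ioc_subset_Icc_self hy) h
    have hslope : Tendsto (slope w y) (𝓝[<] y) (𝓝 d) :=
      (hasDerivAt_iff_tendsto_slope.1 hd).mono_left
        (nhdsWithin_mono y (fun z hz => ne_of_lt hz))
    have hev : ∀ᶠ z in 𝓝[<] y, 0 < slope w y z :=
      hslope.eventually (eventually_gt_nhds hdpos)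
    have hev2 : ∀ᶠ z in 𝓝[<] y, z ∈ Ioo s y := Ioo_mem_nhdsLT_of_mem ⟨hy.1, le_refl y⟩
    obtain ⟨z, hz1, hz2⟩ := (hev.and hev2).exists
    have : w z < 0 := by
      rw [slope_def_field] at hz1
      have hzy : z - y < 0 := sub_neg.2 hz2.2
      have := mul_pos_iff.1 (lt_of_lt_of_le hz1 (le_of_eq (div_eq_mul_inv _ _)))
      -- derive w z - w y < 0
      rcases this with ⟨h1, h2⟩ | ⟨h1, h2⟩
      · exfalso; exact absurd (inv_pos.1 h2) (not_lt.2 hzy.le)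
      · rw [h] at h1; linarith
    exact core z ⟨hz2.1, le_trans hz2.2.le hy.2⟩ this
  · exact h

/-- Key sign inequality at a gap endpoint. -/
lemma endpoint_key {p R P Q G H : ℝ} (hp : p^2 = G*H) (hG : 0 < G) (hH : 0 ≤ H)
    (hP : 0 < P) (hQ : 0 < Q) (hR : R^2 < P*Q) :
    -(p*R) - (P*H + Q*G)/2 < 0 := by
  rcases eq_or_lt_of_le hH with h0 | h0
  · have hp0 : p = 0 := by
      have h2 : p^2 = 0 := by rw [hp, ← h0, mul_zero]
      exact pow_eq_zero_iff (n := 2) (by norm_num) |>.1 h2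
    rw [hp0]
    have h3 : 0 < Q*G := mul_pos hQ hG
    nlinarith [mul_nonneg hP.le hH]
  · have hGH : 0 < G*H := mul_pos hG h0
    have key : (p*R)^2 < ((P*H + Q*G)/2)^2 := by
      nlinarith [sq_nonneg (P*H - Q*G), mul_lt_mul_of_pos_left hR hGH]
    have hS : 0 < (P*H + Q*G)/2 := by positivity
    nlinarith [key, hS]

lemma endpoint_key' {p R P Q G H : ℝ} (hp : p^2 = G*H) (hG : G < 0) (hH : H ≤ 0)
    (hP : 0 < P) (hQ : 0 < Q) (hR : R^2 < P*Q) :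
    0 < -(p*R) - (P*H + Q*G)/2 := by
  have h := endpoint_key (p := p) (R := -R) (P := P) (Q := Q) (G := -G) (H := -H)
    (by rw [hp]; ring) (by linarith) (by linarith) hP hQ (by nlinarith [hR])
  nlinarith [h]

lemma abstract_gap_pos {G H u p Φ Ψ P Q R : ℝ → ℝ} {a b : ℝ} (hab : a < b)
    (hG : ∀ l, HasDerivAt G (R l * G l + P l * Ψ l) l)
    (hu : ∀ l, HasDerivAt u (-(p l * R l) - (P l * H l + Q l * G l)/2) l)
    (h4 : ∀ l, Φ l * Ψ l + G l * H l = 1)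
    (hP : ∀ l, 0 < P l) (hQ : ∀ l, 0 < Q l) (hR : ∀ l, (R l)^2 < P l * Q l)
    (hsum : ∀ l, Φ l + Ψ l = 2 * u l) (hdiff : ∀ l, Ψ l - Φ l = 2 * p l)
    (hgap : ∀ l ∈ Ioo a b, 1 < |u l|) (hua : |u a| ≤ 1) (hub : |u b| ≤ 1)
    (hmid : 1 < u ((a+b)/2)) :
    ∃! l, l ∈ Icc a b ∧ G l = 0 := by
  have ucont : Continuous u := by
    rw [continuous_iff_continuousAt]; exact fun l => (hu l).continuousAt
  have Gcont : Continuous G := by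
    rw [continuous_iff_continuousAt]; exact fun l => (hG l).continuousAt
  have hdet : ∀ l, u l^2 - 1 = p l^2 - G l * H l := fun l => by
    linear_combination h4 l - ((Φ l + Ψ l + 2*u l)/4) * hsum l + ((Ψ l - Φ l + 2*p l)/4) * hdiff l
  have hmmem : (a+b)/2 ∈ Ioo a b := ⟨by linarith, by linarith⟩
  -- u > 1 on all of Ioo a b
  have hcase : ∀ l ∈ Ioo a b, 1 < u l := by
    intro l hl
    rcases lt_abs.1 (hgap l hl) with h | h
    · exact h
    · exfalso
      have hsub : uIcc l ((a+b)/2) ⊆ Ioo a b :=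
        (ordConnected_Ioo).uIcc_subset hl hmmem
      obtain ⟨z, hz1, hz2⟩ := intermediate_value_uIcc
        (ucont.continuousOn (s := uIcc l ((a+b)/2)))
        (show (0:ℝ) ∈ uIcc (u l) (u ((a+b)/2)) from
          mem_uIcc.2 (Or.inl ⟨by linarith, by linarith⟩))
      have := hgap z (hsub hz1)
      rw [hz2] at this
      norm_num at this
  -- endpoint values
  have hua1 : u a = 1 := by
    refine le_antisymm (abs_le.1 hua).2 ?_
    have ht : Tendsto u (𝓝[>] a) (𝓝 (u a)) := (ucont.tendsto a).mono_left nhdsWithin_le_nhds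
    refine ge_of_tendsto ht ?_
    filter_upwards [Ioo_mem_nhdsGT_of_mem ⟨le_refl a, hab⟩] with z hz
    exact (hcase z hz).le
  have hub1 : u b = 1 := by
    refine le_antisymm (abs_le.1 hub).2 ?_
    have ht : Tendsto u (𝓝[<] b) (𝓝 (u b)) := (ucont.tendsto b).mono_left nhdsWithin_le_nhds
    refine ge_of_tendsto ht ?_
    filter_upwards [Ioo_mem_nhdsLT_of_mem ⟨hab, le_refl b⟩] with z hz
    exact (hcase z hz).le
  have huIcc : ∀ l ∈ Icc a b, 1 ≤ u l := by
    intro l hl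
    rcases eq_or_lt_of_le hl.1 with h1 | h1
    · rw [← h1, hua1]
    · rcases eq_or_lt_of_le hl.2 with h2 | h2
      · rw [h2, hub1]
      · exact (hcase l ⟨h1, h2⟩).le
  -- at any zero of G in [a,b], the derivative of G is positive
  have hGderiv_pos : ∀ l ∈ Icc a b, G l = 0 → ∃ d, HasDerivAt G d l ∧ 0 < d := by
    intro l hl h0
    refine ⟨R l * G l + P l * Ψ l, hG l, ?_⟩
    have hφψ : Φ l * Ψ l = 1 := by have := h4 l; rw [h0] at this; linarith
    have hΨ : 0 < Ψ l := by nlinarith [hsum l, huIcc l hl, sq_nonneg (Ψ l - 1)]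
    rw [h0, mul_zero, zero_add]
    exact mul_pos (hP l) hΨ
  -- uniqueness
  have huniq : ∀ l1 ∈ Icc a b, ∀ l2 ∈ Icc a b, G l1 = 0 → G l2 = 0 → l1 = l2 := by
    have aux : ∀ x y : ℝ, x ∈ Icc a b → y ∈ Icc a b → G x = 0 → G y = 0 → x < y → False := by
      intro x y hx hy hzx hzy hxy
      have hsub : Icc x y ⊆ Icc a b := Icc_subset_Icc hx.1 hy.2
      have hpos := pos_of_deriv_pos_at_zeros (s := x) (t := y)
        (Gcont.continuousOn)
        (fun z hz hz0 => hGderiv_pos z (hsub hz) hz0)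
        (le_of_eq hzx.symm)
      have := hpos y ⟨hxy, le_refl y⟩
      rw [hzy] at this
      exact lt_irrefl 0 this
    intro l1 h1 l2 h2 hz1 hz2
    by_contra hne
    rcases lt_or_gt_of_ne hne with h | h
    · exact aux l1 l2 h1 h2 hz1 hz2 h
    · exact aux l2 l1 h2 h1 hz2 hz1 h
  -- existence
  have hex : ∃ l ∈ Icc a b, G l = 0 := by
    by_contra hno
    push_neg at hno
    have hGa : G a ≠ 0 := hno a ⟨le_refl a, hab.le⟩
    have hsign : ∀ l ∈ Icc a b, G l ≠ 0 → (0 < G a → 0 < G l) ∧ (G a < 0 → G l < 0) := by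
      intro l hl _
      constructor <;> intro hsgn <;> by_contra hcon <;> push_neg at hcon
      · have hq : G l < 0 := lt_of_le_of_ne hcon (hno l hl)
        obtain ⟨z, hz1, hz2⟩ := intermediate_value_uIcc
          (Gcont.continuousOn (s := uIcc a l))
          (show (0:ℝ) ∈ uIcc (G a) (G l) from mem_uIcc.2 (Or.inr ⟨hq.le, hsgn.le⟩))
        exact hno z ((ordConnected_Icc).uIcc_subset ⟨le_refl a, hab.le⟩ hl hz1) hz2
      · have hq : 0 < G l := lt_of_le_of_ne hcon (Ne.symm (hno l hl))
        obtain ⟨z, hz1, hz2⟩ := intermediate_value_uIcc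
          (Gcont.continuousOn (s := uIcc a l))
          (show (0:ℝ) ∈ uIcc (G a) (G l) from mem_uIcc.2 (Or.inl ⟨hsgn.le, hq.le⟩))
        exact hno z ((ordConnected_Icc).uIcc_subset ⟨le_refl a, hab.le⟩ hl hz1) hz2
    rcases lt_or_gt_of_ne hGa with hGaneg | hGapos
    · -- G < 0 on Icc; contradiction at b
      have hGb : G b < 0 := (hsign b ⟨hab.le, le_refl b⟩ (hno b ⟨hab.le, le_refl b⟩)).2 hGaneg
      have hpb : p b ^2 = G b * H b := by have := hdet b; rw [hub1] at this; linarith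
      have hHb : H b ≤ 0 := by nlinarith [sq_nonneg (p b)]
      have hd := endpoint_key' hpb hGb hHb (hP b) (hQ b) (hR b)
      have hslope : (-(p b * R b) - (P b * H b + Q b * G b)/2) ≤ 0 :=
        deriv_nonpos_of_left hab (hu b) (fun z hz => by rw [hub1]; exact (hcase z hz).le)
      linarith
    · -- G > 0 on Icc; contradiction at a
      have hpa : p a ^2 = G a * H a := by have := hdet a; rw [hua1] at this; linarith
      have hHa : 0 ≤ H a := by nlinarith [sq_nonneg (p a)]
      have hd := endpoint_key hpa hGapos hHa (hP a) (hQ a) (hR a)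
      have hslope : 0 ≤ (-(p a * R a) - (P a * H a + Q a * G a)/2) :=
        deriv_nonneg_of_right hab (hu a) (fun z hz => by rw [hua1]; exact (hcase z hz).le)
      linarith
  obtain ⟨l0, hl0, hGl0⟩ := hex
  exact ⟨l0, ⟨hl0, hGl0⟩, fun y hy => huniq y hy.1 l0 hl0 hy.2 hGl0⟩

lemma abstract_gap {G H u p Φ Ψ P Q R : ℝ → ℝ} {a b : ℝ} (hab : a < b)
    (hG : ∀ l, HasDerivAt G (R l * G l + P l * Ψ l) l)
    (hu : ∀ l, HasDerivAt u (-(p l * R l) - (P l * H l + Q l * G l)/2) l)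
    (h4 : ∀ l, Φ l * Ψ l + G l * H l = 1)
    (hP : ∀ l, 0 < P l) (hQ : ∀ l, 0 < Q l) (hR : ∀ l, (R l)^2 < P l * Q l)
    (hsum : ∀ l, Φ l + Ψ l = 2 * u l) (hdiff : ∀ l, Ψ l - Φ l = 2 * p l)
    (hgap : ∀ l ∈ Ioo a b, 1 < |u l|) (hua : |u a| ≤ 1) (hub : |u b| ≤ 1) :
    ∃! l, l ∈ Icc a b ∧ G l = 0 := by
  have hmmem : (a+b)/2 ∈ Ioo a b := ⟨by linarith, by linarith⟩
  rcases lt_abs.1 (hgap _ hmmem) with h | h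
  · exact abstract_gap_pos hab hG hu h4 hP hQ hR hsum hdiff hgap hua hub h
  · have key := abstract_gap_pos (G := fun l => -G l) (H := fun l => -H l)
      (u := fun l => -u l) (p := fun l => -p l) (Φ := fun l => -Φ l) (Ψ := fun l => -Ψ l)
      (P := P) (Q := Q) (R := R) hab
      (fun l => by
        have := (hG l).fun_neg
        exact this.congr_deriv (by ring))
      (fun l => by
        have := (hu l).fun_neg
        exact this.congr_deriv (by ring))
      (fun l => by have := h4 l; ring_nf; ring_nf at this; linarith)
      hP hQ hR
      (fun l => by have := hsum l; ring_nf; linarith)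
      (fun l => by have := hdiff l; ring_nf; linarith)
      (fun l hl => by rw [abs_neg]; exact hgap l hl)
      (by rw [abs_neg]; exact hua) (by rw [abs_neg]; exact hub)
      (by simpa using h)
    obtain ⟨l0, ⟨hl0, hGl0⟩, huniq⟩ := key
    refine ⟨l0, ⟨hl0, by simpa using hGl0⟩, fun y hy => huniq y ⟨hy.1, by simp [hy.2]⟩⟩

section ZS
variable {L : ℝ} {q : ℝ → ℂ} {T : ℝ → ℝ → Matrix (Fin 2) (Fin 2) ℂ}

/-- row-0 scalar form of the ODE -/
lemma hD0 (hTderiv : ∀ (l : ℝ) (x : ℝ) (i j : Fin 2),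
      HasDerivAt (fun y => T l y i j) ((zsMatrix q (l : ℂ) x * T l x) i j) x)
    (l x : ℝ) (j : Fin 2) :
    HasDerivAt (fun y => T l y 0 j)
      (Complex.I * l * T l x 0 j + Complex.I * q x * T l x 1 j) x := by
  have h := hTderiv l x 0 j
  have : (zsMatrix q (l : ℂ) x * T l x) 0 j
      = Complex.I * l * T l x 0 j + Complex.I * q x * T l x 1 j := by
    simp [zsMatrix, Matrix.mul_apply, Fin.sum_univ_two]
  rwa [this] at h

lemma hD1 (hTderiv : ∀ (l : ℝ) (x : ℝ) (i j : Fin 2),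
      HasDerivAt (fun y => T l y i j) ((zsMatrix q (l : ℂ) x * T l x) i j) x)
    (l x : ℝ) (j : Fin 2) :
    HasDerivAt (fun y => T l y 1 j)
      (-(Complex.I * conj (q x) * T l x 0 j) - Complex.I * l * T l x 1 j) x := by
  have h := hTderiv l x 1 j
  have : (zsMatrix q (l : ℂ) x * T l x) 1 j
      = -(Complex.I * conj (q x) * T l x 0 j) - Complex.I * l * T l x 1 j := by
    simp [zsMatrix, Matrix.mul_apply, Fin.sum_univ_two]
    ring
  rwa [this] at h

lemma Tcont (hTderiv : ∀ (l : ℝ) (x : ℝ) (i j : Fin 2),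
      HasDerivAt (fun y => T l y i j) ((zsMatrix q (l : ℂ) x * T l x) i j) x)
    (l : ℝ) (i j : Fin 2) : Continuous (fun x => T l x i j) :=
  continuous_iff_continuousAt.2 fun x => (hTderiv l x i j).continuousAt

/-- boundedness of a continuous periodic function -/
lemma qbound (hL : 0 < L) (hq : Continuous q) (hper : ∀ x, q (x + 2 * L) = q x) :
    ∃ Cq : ℝ, 0 ≤ Cq ∧ ∀ x, ‖q x‖ ≤ Cq := by
  have hper' : Function.Periodic (fun y => ‖q y‖) (2*L) := fun y => by
    simp only []
    rw [hper]
  have hcont : ContinuousOn (fun y => ‖q y‖) (Icc 0 (0 + 2*L)) :=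
    (continuous_norm.comp hq).continuousOn
  obtain ⟨xm, _, hxm⟩ := isCompact_Icc.exists_isMaxOn
    (nonempty_Icc.2 (by linarith)) hcont
  refine ⟨‖q xm‖, norm_nonneg _, fun x => ?_⟩
  obtain ⟨y, hy, hyx⟩ := hper'.exists_mem_Ioc (by linarith) x 0
  rw [hyx]
  exact hxm (Ioc_subset_Icc_self hy)

end ZS

noncomputable def zsV (q : ℝ → ℂ) (l : ℝ) (x : ℝ) (w : Fin 2 → ℂ) : Fin 2 → ℂ :=
  ![Complex.I*l*w 0 + Complex.I*q x*w 1,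
    -(Complex.I*(starRingEnd ℂ) (q x)*w 0) - Complex.I*l*w 1]

section ZS2
variable {L : ℝ} {q : ℝ → ℂ} {T : ℝ → ℝ → Matrix (Fin 2) (Fin 2) ℂ}

lemma lipsv {l Cq : ℝ} (hCq : ∀ x, ‖q x‖ ≤ Cq) (x : ℝ) :
    LipschitzWith (Real.toNNReal (|l| + Cq)) (zsV q l x) := by
  have hCq0 : 0 ≤ Cq := le_trans (norm_nonneg _) (hCq 0)
  apply LipschitzWith.of_dist_le_mul
  intro w w'
  rw [Real.coe_toNNReal _ (by positivity)]
  have h0 : dist (w 0) (w' 0) ≤ dist w w' := dist_le_pi_dist w w' 0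
  have h1 : dist (w 1) (w' 1) ≤ dist w w' := dist_le_pi_dist w w' 1
  have hd : 0 ≤ dist w w' := dist_nonneg
  rw [dist_pi_le_iff (by positivity)]
  intro i
  fin_cases i
  · simp only [Fin.mk_zero, Fin.mk_one, zsV, Matrix.cons_val_zero, Complex.dist_eq]
    have he : Complex.I*l*w 0 + Complex.I*q x*w 1 - (Complex.I*l*w' 0 + Complex.I*q x*w' 1)
        = Complex.I*l*(w 0 - w' 0) + Complex.I*q x*(w 1 - w' 1) := by ring
    rw [he]
    calc ‖Complex.I*l*(w 0 - w' 0) + Complex.I*q x*(w 1 - w' 1)‖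
        ≤ ‖Complex.I*l*(w 0 - w' 0)‖ + ‖Complex.I*q x*(w 1 - w' 1)‖ :=
          norm_add_le _ _
      _ = |l| * ‖w 0 - w' 0‖ + ‖q x‖ * ‖w 1 - w' 1‖ := by
          simp [map_mul, Complex.norm_real]
      _ ≤ |l| * dist w w' + Cq * dist w w' := by
          have := Complex.dist_eq (w 0) (w' 0)
          have := Complex.dist_eq (w 1) (w' 1)
          gcongr <;> simp_all [Complex.dist_eq, norm_nonneg]
      _ = (|l| + Cq) * dist w w' := by ring
  · simp only [Fin.mk_zero, Fin.mk_one, zsV, Matrix.cons_val_one, Matrix.head_cons, Complex.dist_eq,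
      Matrix.cons_val_fin_one]
    have he : -(Complex.I*(starRingEnd ℂ) (q x)*w 0) - Complex.I*l*w 1
        - (-(Complex.I*(starRingEnd ℂ) (q x)*w' 0) - Complex.I*l*w' 1)
        = -(Complex.I*(starRingEnd ℂ) (q x)*(w 0 - w' 0)) - Complex.I*l*(w 1 - w' 1) := by ring
    rw [he]
    calc ‖-(Complex.I*(starRingEnd ℂ) (q x)*(w 0 - w' 0)) - Complex.I*l*(w 1 - w' 1)‖
        ≤ ‖Complex.I*(starRingEnd ℂ) (q x)*(w 0 - w' 0)‖
          + ‖Complex.I*l*(w 1 - w' 1)‖ := by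
          exact (norm_sub_le _ _).trans (by simp [map_neg])
      _ = ‖q x‖ * ‖w 0 - w' 0‖ + |l| * ‖w 1 - w' 1‖ := by
          simp [map_mul, Complex.norm_real, Complex.norm_conj]
      _ ≤ Cq * dist w w' + |l| * dist w w' := by
          gcongr <;> simp_all [Complex.dist_eq, norm_nonneg]
      _ = (|l| + Cq) * dist w w' := by ring
end ZS2

section ZS3
variable {L : ℝ} {q : ℝ → ℂ} {T : ℝ → ℝ → Matrix (Fin 2) (Fin 2) ℂ}

lemma col_unique {l Cq : ℝ} (hCq : ∀ x, ‖q x‖ ≤ Cq)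
    {Y Z : ℝ → Fin 2 → ℂ}
    (hY : ∀ x, HasDerivAt Y (zsV q l x (Y x)) x)
    (hZ : ∀ x, HasDerivAt Z (zsV q l x (Z x)) x)
    (h0 : Y 0 = Z 0) {c : ℝ} :
    ∀ x ∈ Icc (0:ℝ) c, Y x = Z x := by
  apply ODE_solution_unique (v := zsV q l) (fun t => lipsv hCq t)
  · exact fun x _ => (hY x).continuousAt.continuousWithinAt
  · exact fun t _ => (hY t).hasDerivWithinAt
  · exact fun x _ => (hZ x).continuousAt.continuousWithinAt
  · exact fun t _ => (hZ t).hasDerivWithinAt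
  · exact h0

lemma Tsymm (hq : Continuous q)
    (hT0 : ∀ l : ℝ, T l 0 = 1)
    (hTderiv : ∀ (l : ℝ) (x : ℝ) (i j : Fin 2),
      HasDerivAt (fun y => T l y i j) ((zsMatrix q (l : ℂ) x * T l x) i j) x)
    {Cq : ℝ} (hCq : ∀ x, ‖q x‖ ≤ Cq)
    (l : ℝ) {c : ℝ} {x : ℝ} (hx : x ∈ Icc (0:ℝ) c) :
    T l x 1 1 = (starRingEnd ℂ) (T l x 0 0) ∧
    T l x 0 1 = (starRingEnd ℂ) (T l x 1 0) := by
  set Y : ℝ → Fin 2 → ℂ := fun x => ![T l x 0 0, T l x 1 0] with hYdef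
  set Z : ℝ → Fin 2 → ℂ := fun x => ![(starRingEnd ℂ) (T l x 1 1), (starRingEnd ℂ) (T l x 0 1)]
    with hZdef
  have hY : ∀ y, HasDerivAt Y (zsV q l y (Y y)) y := by
    intro y
    rw [hasDerivAt_pi]
    intro i
    fin_cases i
    · have h := hD0 hTderiv l y 0
      simpa [hYdef, zsV] using h
    · have h := hD1 hTderiv l y 0
      simpa [hYdef, zsV] using h
  have hZ : ∀ y, HasDerivAt Z (zsV q l y (Z y)) y := by
    intro y
    rw [hasDerivAt_pi]
    intro i
    fin_cases i
    · have h := (hD1 hTderiv l y 1).star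
      have he : star (-(Complex.I * (starRingEnd ℂ) (q y) * T l y 0 1)
          - Complex.I * (l:ℂ) * T l y 1 1)
          = zsV q l y (Z y) 0 := by
        simp only [zsV, hZdef, Matrix.cons_val_zero, Matrix.cons_val_one, Matrix.head_cons,
          star_sub, star_neg, star_mul', Complex.star_def, map_mul, Complex.conj_I,
          Complex.conj_conj, Complex.conj_ofReal]
        ring
      rw [he] at h
      simpa [hZdef, Complex.star_def] using h
    · have h := (hD0 hTderiv l y 1).star
      have he : star (Complex.I * (l:ℂ) * T l y 0 1 + Complex.I * q y * T l y 1 1)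
          = zsV q l y (Z y) 1 := by
        simp only [zsV, hZdef, Matrix.cons_val_zero, Matrix.cons_val_one, Matrix.head_cons,
          star_add, star_mul', Complex.star_def, map_mul, Complex.conj_I,
          Complex.conj_conj, Complex.conj_ofReal]
        ring
      rw [he] at h
      simpa [hZdef, Complex.star_def] using h
  have h0 : Y 0 = Z 0 := by
    funext i
    fin_cases i <;> simp [hYdef, hZdef, hT0 l, Matrix.one_apply]
  have heq := col_unique hCq hY hZ h0 x hx
  constructor
  · have := congrFun heq 0
    simp only [hYdef, hZdef, Matrix.cons_val_zero] at this
    rw [this, Complex.conj_conj]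
  · have := congrFun heq 1
    simp only [hYdef, hZdef, Matrix.cons_val_one, Matrix.head_cons, Matrix.cons_val_fin_one] at this
    rw [this, Complex.conj_conj]

end ZS3

section ZS4
variable {L : ℝ} {q : ℝ → ℂ} {T : ℝ → ℝ → Matrix (Fin 2) (Fin 2) ℂ}

lemma Tdet (hT0 : ∀ l : ℝ, T l 0 = 1)
    (hTderiv : ∀ (l : ℝ) (x : ℝ) (i j : Fin 2),
      HasDerivAt (fun y => T l y i j) ((zsMatrix q (l : ℂ) x * T l x) i j) x)
    (l : ℝ) {c : ℝ} {x : ℝ} (hx : x ∈ Icc (0:ℝ) c) :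
    T l x 0 0 * T l x 1 1 - T l x 0 1 * T l x 1 0 = 1 := by
  set D : ℝ → ℂ := fun y => T l y 0 0 * T l y 1 1 - T l y 0 1 * T l y 1 0 with hDdef
  have hD : ∀ y : ℝ, HasDerivAt D 0 y := by
    intro y
    have h00 := hD0 hTderiv l y 0
    have h01 := hD0 hTderiv l y 1
    have h10 := hD1 hTderiv l y 0
    have h11 := hD1 hTderiv l y 1
    have h := (h00.fun_mul h11).fun_sub (h01.fun_mul h10)
    exact h.congr_deriv (by ring)
  have hconst := constant_of_has_deriv_right_zero
    (f := D) (a := (0:ℝ)) (b := c)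
    (fun y _ => (hD y).continuousAt.continuousWithinAt)
    (fun y _ => (hD y).hasDerivWithinAt)
  have h0 : D 0 = 1 := by
    simp [hDdef, hT0 l, Matrix.one_apply]
  have := hconst x hx
  rw [h0] at this
  exact this

end ZS4

noncomputable def zsN (T : ℝ → ℝ → Matrix (Fin 2) (Fin 2) ℂ) (l : ℝ) (s : ℝ) :
    Matrix (Fin 2) (Fin 2) ℂ :=
  !![Complex.I*(T l s 0 0*T l s 1 1 + T l s 0 1*T l s 1 0), 2*Complex.I*(T l s 0 1*T l s 1 1);
     -2*Complex.I*(T l s 0 0*T l s 1 0), -Complex.I*(T l s 0 0*T l s 1 1 + T l s 0 1*T l s 1 0)]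

noncomputable def zsC (T : ℝ → ℝ → Matrix (Fin 2) (Fin 2) ℂ) (l : ℝ) (x : ℝ) :
    Fin 2 → Fin 2 → ℂ :=
  fun i j => ∫ s in (0:ℝ)..x, zsN T l s i j

noncomputable def zsS (T : ℝ → ℝ → Matrix (Fin 2) (Fin 2) ℂ) (l : ℝ) (x : ℝ) :
    Fin 2 → Fin 2 → ℂ :=
  fun i j => T l x i 0 * zsC T l x 0 j + T l x i 1 * zsC T l x 1 j

section ZS5
variable {L : ℝ} {q : ℝ → ℂ} {T : ℝ → ℝ → Matrix (Fin 2) (Fin 2) ℂ}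
variable (hTderiv : ∀ (l : ℝ) (x : ℝ) (i j : Fin 2),
      HasDerivAt (fun y => T l y i j) ((zsMatrix q (l : ℂ) x * T l x) i j) x)
include hTderiv

lemma zsNcont (l : ℝ) (i j : Fin 2) : Continuous fun s => zsN T l s i j := by
  have c00 := Tcont hTderiv l 0 0
  have c01 := Tcont hTderiv l 0 1
  have c10 := Tcont hTderiv l 1 0
  have c11 := Tcont hTderiv l 1 1
  fin_cases i <;> fin_cases j <;>
    simp only [zsN, Matrix.cons_val', Matrix.cons_val_zero, Matrix.cons_val_one,
      Matrix.head_cons, Matrix.head_fin_const, Fin.mk_zero, Fin.mk_one, Matrix.of_apply,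
      Matrix.empty_val', Matrix.cons_val_fin_one] <;>
    fun_prop

lemma zsCzero (l : ℝ) (i j : Fin 2) : zsC T l 0 i j = 0 := by
  simp [zsC]

lemma zsCderiv (l x : ℝ) (i j : Fin 2) :
    HasDerivAt (fun y => zsC T l y i j) (zsN T l x i j) x :=
  ((zsNcont hTderiv l i j).integral_hasStrictDerivAt 0 x).hasDerivAt

lemma zsCcont (l : ℝ) (i j : Fin 2) : Continuous fun y => zsC T l y i j :=
  continuous_iff_continuousAt.2 fun x => (zsCderiv hTderiv l x i j).continuousAt

lemma zsScont (l : ℝ) (i j : Fin 2) : Continuous fun y => zsS T l y i j := by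
  have c0 := Tcont hTderiv l i 0
  have c1 := Tcont hTderiv l i 1
  have d0 := zsCcont hTderiv l 0 j
  have d1 := zsCcont hTderiv l 1 j
  simp only [zsS]
  fun_prop
end ZS5

section ZS6
variable {L : ℝ} {q : ℝ → ℂ} {T : ℝ → ℝ → Matrix (Fin 2) (Fin 2) ℂ}
variable (hT0 : ∀ l : ℝ, T l 0 = 1)
  (hTderiv : ∀ (l : ℝ) (x : ℝ) (i j : Fin 2),
      HasDerivAt (fun y => T l y i j) ((zsMatrix q (l : ℂ) x * T l x) i j) x)
include hT0 hTderiv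

lemma zsSderiv0 (l : ℝ) {c x : ℝ} (hx : x ∈ Icc (0:ℝ) c) (j : Fin 2) :
    HasDerivAt (fun y => zsS T l y 0 j)
      (Complex.I*l*zsS T l x 0 j + Complex.I*q x*zsS T l x 1 j + Complex.I*T l x 0 j) x := by
  have hdet := Tdet hT0 hTderiv l hx
  have h := ((hD0 hTderiv l x 0).fun_mul (zsCderiv hTderiv l x 0 j)).fun_add
    ((hD0 hTderiv l x 1).fun_mul (zsCderiv hTderiv l x 1 j))
  simp only [zsS]
  refine h.congr_deriv ?_
  symm
  fin_cases j <;>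
    simp only [zsN, Matrix.cons_val', Matrix.cons_val_zero, Matrix.cons_val_one,
      Matrix.head_cons, Matrix.head_fin_const, Fin.mk_zero, Fin.mk_one, Matrix.of_apply,
      Matrix.empty_val', Matrix.cons_val_fin_one]
  · linear_combination (-(Complex.I * T l x 0 0)) * hdet
  · linear_combination (-(Complex.I * T l x 0 1)) * hdet

lemma zsSderiv1 (l : ℝ) {c x : ℝ} (hx : x ∈ Icc (0:ℝ) c) (j : Fin 2) :
    HasDerivAt (fun y => zsS T l y 1 j)
      (-(Complex.I*(starRingEnd ℂ) (q x)*zsS T l x 0 j) - Complex.I*l*zsS T l x 1 j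
        - Complex.I*T l x 1 j) x := by
  have hdet := Tdet hT0 hTderiv l hx
  have h := ((hD1 hTderiv l x 0).fun_mul (zsCderiv hTderiv l x 0 j)).fun_add
    ((hD1 hTderiv l x 1).fun_mul (zsCderiv hTderiv l x 1 j))
  simp only [zsS]
  refine h.congr_deriv ?_
  symm
  fin_cases j <;>
    simp only [zsN, Matrix.cons_val', Matrix.cons_val_zero, Matrix.cons_val_one,
      Matrix.head_cons, Matrix.head_fin_const, Fin.mk_zero, Fin.mk_one, Matrix.of_apply,
      Matrix.empty_val', Matrix.cons_val_fin_one]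
  · linear_combination (Complex.I * T l x 1 0) * hdet
  · linear_combination (Complex.I * T l x 1 1) * hdet

end ZS6

lemma abs3 {A B C : ℂ} {a b c : ℝ} (hA : ‖A‖ ≤ a) (hB : ‖B‖ ≤ b)
    (hC : ‖C‖ ≤ c) : ‖A + B + C‖ ≤ a + b + c :=
  le_trans (norm_add_le _ _)
    (add_le_add (le_trans (norm_add_le _ _) (add_le_add hA hB)) hC)

lemma abs3' {A B C : ℂ} {a b c : ℝ} (hA : ‖A‖ ≤ a) (hB : ‖B‖ ≤ b)
    (hC : ‖C‖ ≤ c) : ‖-A - B - C‖ ≤ a + b + c := by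
  have he : -A - B - C = -(A + B + C) := by ring
  rw [he, norm_neg]
  exact abs3 hA hB hC

section ZS7
variable {L : ℝ} {q : ℝ → ℂ} {T : ℝ → ℝ → Matrix (Fin 2) (Fin 2) ℂ}

lemma Tlambda_deriv (hL : 0 < L)
    (hT0 : ∀ l : ℝ, T l 0 = 1)
    (hTderiv : ∀ (l : ℝ) (x : ℝ) (i j : Fin 2),
      HasDerivAt (fun y => T l y i j) ((zsMatrix q (l : ℂ) x * T l x) i j) x)
    {Cq : ℝ} (hCq0 : 0 ≤ Cq) (hCq : ∀ x, ‖q x‖ ≤ Cq) (l : ℝ) (i j : Fin 2) :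
    HasDerivAt (fun m => T m (2*L) i j) (zsS T l (2*L) i j) l := by
  have h2L : (0:ℝ) < 2*L := by linarith
  obtain ⟨CS, hCS0, hCS⟩ : ∃ CS : ℝ, 0 ≤ CS ∧
      ∀ x ∈ Icc (0:ℝ) (2*L), ∀ i' j' : Fin 2, ‖zsS T l x i' j'‖ ≤ CS := by
    set g : ℝ → ℝ := fun x => max (max (‖zsS T l x 0 0‖) (‖zsS T l x 0 1‖))
      (max (‖zsS T l x 1 0‖) (‖zsS T l x 1 1‖)) with hgdef
    have hgc : Continuous g := by
      apply Continuous.max <;> apply Continuous.max <;>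
        exact continuous_norm.comp (zsScont hTderiv l _ _)
    obtain ⟨xm, hxmm, hxm⟩ := isCompact_Icc.exists_isMaxOn (nonempty_Icc.2 h2L.le)
      hgc.continuousOn
    refine ⟨g xm, le_trans (norm_nonneg _) (le_trans (le_max_left _ _) (le_max_left _ _)),
      fun x hx i' j' => ?_⟩
    have hle : g x ≤ g xm := hxm hx
    refine le_trans ?_ hle
    fin_cases i' <;> fin_cases j'
    · exact le_trans (le_max_left _ _) (le_max_left _ _)
    · exact le_trans (le_max_right _ _) (le_max_left _ _)
    · exact le_trans (le_max_left _ _) (le_max_right _ _)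
    · exact le_trans (le_max_right _ _) (le_max_right _ _)
  set K : ℝ := |l| + 1 + Cq with hKdef
  have hK : 0 < K := by positivity
  set C4 : ℝ := CS / K * (Real.exp (K * (2*L)) - 1) with hC4def
  have hexp1 : 1 ≤ Real.exp (K * (2*L)) := by
    rw [Real.one_le_exp_iff]
    positivity
  have hC40 : 0 ≤ C4 := mul_nonneg (div_nonneg hCS0 hK.le) (by linarith)
  have key : ∀ m : ℝ, |m - l| ≤ 1 →
      ‖T m (2*L) i j - T l (2*L) i j
        - ((m - l : ℝ):ℂ) * zsS T l (2*L) i j‖ ≤ (m - l)^2 * C4 := by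
    intro m hm
    set c : ℂ := ((m - l : ℝ):ℂ) with hcdef
    set Rf : ℝ → Fin 2 → Fin 2 → ℂ :=
      fun x i' j' => T m x i' j' - T l x i' j' - c * zsS T l x i' j' with hRdef
    set Dv : ℝ → Fin 2 → Fin 2 → ℂ := fun x =>
      ![![Complex.I*(m:ℂ)*Rf x 0 0 + Complex.I*q x*Rf x 1 0 + c^2*Complex.I*zsS T l x 0 0,
          Complex.I*(m:ℂ)*Rf x 0 1 + Complex.I*q x*Rf x 1 1 + c^2*Complex.I*zsS T l x 0 1],
        ![-(Complex.I*(starRingEnd ℂ) (q x)*Rf x 0 0) - Complex.I*(m:ℂ)*Rf x 1 0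
            - c^2*Complex.I*zsS T l x 1 0,
          -(Complex.I*(starRingEnd ℂ) (q x)*Rf x 0 1) - Complex.I*(m:ℂ)*Rf x 1 1
            - c^2*Complex.I*zsS T l x 1 1]] with hDdef
    have hRcont : Continuous Rf := by
      apply continuous_pi; intro i'; apply continuous_pi; intro j'
      exact ((Tcont hTderiv m i' j').sub (Tcont hTderiv l i' j')).sub
        (continuous_const.mul (zsScont hTderiv l i' j'))
    have hRderiv : ∀ x ∈ Ico (0:ℝ) (2*L), HasDerivAt Rf (Dv x) x := by
      intro x hx
      have hxIcc : x ∈ Icc (0:ℝ) (2*L) := Ico_subset_Icc_self hx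
      rw [hasDerivAt_pi]
      intro i'
      rw [hasDerivAt_pi]
      intro j'
      fin_cases i' <;> fin_cases j'
      · show HasDerivAt (fun x => Rf x 0 0) (Dv x 0 0) x
        have h := ((hD0 hTderiv m x 0).sub (hD0 hTderiv l x 0)).sub
            ((zsSderiv0 hT0 hTderiv l hxIcc 0).const_mul c)
        have he : Dv x 0 0 = Complex.I * (m:ℂ) * T m x 0 0 + Complex.I * q x * T m x 1 0
            - (Complex.I * (l:ℂ) * T l x 0 0 + Complex.I * q x * T l x 1 0)
            - c * (Complex.I*(l:ℂ)*zsS T l x 0 0 + Complex.I*q x*zsS T l x 1 0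
              + Complex.I*T l x 0 0) := by
          simp only [hDdef, Matrix.cons_val_zero, hRdef, hcdef]
          push_cast
          ring
        rw [he]
        exact h
      · show HasDerivAt (fun x => Rf x 0 1) (Dv x 0 1) x
        have h := ((hD0 hTderiv m x 1).sub (hD0 hTderiv l x 1)).sub
            ((zsSderiv0 hT0 hTderiv l hxIcc 1).const_mul c)
        have he : Dv x 0 1 = Complex.I * (m:ℂ) * T m x 0 1 + Complex.I * q x * T m x 1 1
            - (Complex.I * (l:ℂ) * T l x 0 1 + Complex.I * q x * T l x 1 1)
            - c * (Complex.I*(l:ℂ)*zsS T l x 0 1 + Complex.I*q x*zsS T l x 1 1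
              + Complex.I*T l x 0 1) := by
          simp only [hDdef, Matrix.cons_val_zero, Matrix.cons_val_one, Matrix.head_cons,
            hRdef, hcdef]
          push_cast
          ring
        rw [he]
        exact h
      · show HasDerivAt (fun x => Rf x 1 0) (Dv x 1 0) x
        have h := ((hD1 hTderiv m x 0).sub (hD1 hTderiv l x 0)).sub
            ((zsSderiv1 hT0 hTderiv l hxIcc 0).const_mul c)
        have he : Dv x 1 0 = -(Complex.I * (starRingEnd ℂ) (q x) * T m x 0 0)
            - Complex.I * (m:ℂ) * T m x 1 0
            - (-(Complex.I * (starRingEnd ℂ) (q x) * T l x 0 0)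
              - Complex.I * (l:ℂ) * T l x 1 0)
            - c * (-(Complex.I*(starRingEnd ℂ) (q x)*zsS T l x 0 0)
              - Complex.I*(l:ℂ)*zsS T l x 1 0 - Complex.I*T l x 1 0) := by
          simp only [hDdef, Matrix.cons_val_zero, Matrix.cons_val_one, Matrix.head_cons,
            hRdef, hcdef]
          push_cast
          ring
        rw [he]
        exact h
      · show HasDerivAt (fun x => Rf x 1 1) (Dv x 1 1) x
        have h := ((hD1 hTderiv m x 1).sub (hD1 hTderiv l x 1)).sub
            ((zsSderiv1 hT0 hTderiv l hxIcc 1).const_mul c)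
        have he : Dv x 1 1 = -(Complex.I * (starRingEnd ℂ) (q x) * T m x 0 1)
            - Complex.I * (m:ℂ) * T m x 1 1
            - (-(Complex.I * (starRingEnd ℂ) (q x) * T l x 0 1)
              - Complex.I * (l:ℂ) * T l x 1 1)
            - c * (-(Complex.I*(starRingEnd ℂ) (q x)*zsS T l x 0 1)
              - Complex.I*(l:ℂ)*zsS T l x 1 1 - Complex.I*T l x 1 1) := by
          simp only [hDdef, Matrix.cons_val_zero, Matrix.cons_val_one, Matrix.head_cons,
            hRdef, hcdef]
          push_cast
          ring
        rw [he]
        exact h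
    have hR0 : Rf 0 = 0 := by
      funext i' j'
      simp [hRdef, hT0 m, hT0 l, zsS, zsC]
    set ε : ℝ := (m - l)^2 * CS with hεdef
    have hε0 : 0 ≤ ε := by positivity
    have hmb : |m| ≤ |l| + 1 := by
      have := abs_sub_abs_le_abs_sub m l
      linarith
    have hbound : ∀ x ∈ Ico (0:ℝ) (2*L), ‖Dv x‖ ≤ K * ‖Rf x‖ + ε := by
      intro x hx
      have hxIcc : x ∈ Icc (0:ℝ) (2*L) := Ico_subset_Icc_self hx
      have hRnorm : ∀ i' j' : Fin 2, ‖Rf x i' j'‖ ≤ ‖Rf x‖ := by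
        intro i' j'
        calc ‖Rf x i' j'‖ = ‖Rf x i' j'‖ := rfl
          _ ≤ ‖Rf x i'‖ := norm_le_pi_norm (Rf x i') j'
          _ ≤ ‖Rf x‖ := norm_le_pi_norm (Rf x) i'
      have hRn0 : 0 ≤ ‖Rf x‖ := norm_nonneg _
      have p1 : ∀ j' : Fin 2, ‖Complex.I*(m:ℂ)*Rf x 0 j'‖ ≤ (|l|+1) * ‖Rf x‖ := by
        intro j'
        rw [norm_mul, norm_mul, Complex.norm_I, one_mul, Complex.norm_real, Real.norm_eq_abs]
        exact mul_le_mul hmb (hRnorm 0 j') (norm_nonneg _) (by positivity)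
      have p1' : ∀ j' : Fin 2, ‖Complex.I*(m:ℂ)*Rf x 1 j'‖ ≤ (|l|+1) * ‖Rf x‖ := by
        intro j'
        rw [norm_mul, norm_mul, Complex.norm_I, one_mul, Complex.norm_real, Real.norm_eq_abs]
        exact mul_le_mul hmb (hRnorm 1 j') (norm_nonneg _) (by positivity)
      have p2 : ∀ j' : Fin 2, ‖Complex.I*q x*Rf x 1 j'‖ ≤ Cq * ‖Rf x‖ := by
        intro j'
        rw [norm_mul, norm_mul, Complex.norm_I, one_mul]
        exact mul_le_mul (hCq x) (hRnorm 1 j') (norm_nonneg _) hCq0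
      have p2' : ∀ j' : Fin 2,
          ‖Complex.I*(starRingEnd ℂ) (q x)*Rf x 0 j'‖ ≤ Cq * ‖Rf x‖ := by
        intro j'
        rw [norm_mul, norm_mul, Complex.norm_I, one_mul, Complex.norm_conj]
        exact mul_le_mul (hCq x) (hRnorm 0 j') (norm_nonneg _) hCq0
      have p3 : ∀ i' j' : Fin 2,
          ‖c^2*Complex.I*zsS T l x i' j'‖ ≤ (m-l)^2 * CS := by
        intro i' j'
        rw [norm_mul, norm_mul, Complex.norm_I, mul_one, norm_pow, hcdef, Complex.norm_real, Real.norm_eq_abs, _root_.sq_abs]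
        exact mul_le_mul_of_nonneg_left (hCS x hxIcc i' j') (sq_nonneg _)
      have hKsplit : K * ‖Rf x‖ + ε = ((|l|+1) * ‖Rf x‖ + Cq * ‖Rf x‖) + (m-l)^2*CS := by
        rw [hKdef, hεdef]; ring
      have hKsplit' : K * ‖Rf x‖ + ε = (Cq * ‖Rf x‖ + (|l|+1) * ‖Rf x‖) + (m-l)^2*CS := by
        rw [hKdef, hεdef]; ring
      rw [pi_norm_le_iff_of_nonneg (by positivity)]
      intro i'
      rw [pi_norm_le_iff_of_nonneg (by positivity)]
      intro j'
      fin_cases i' <;> fin_cases j' <;>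
        simp only [hDdef, Matrix.cons_val_zero, Matrix.cons_val_one, Matrix.head_cons,
          Fin.mk_zero, Fin.mk_one] <;>
        rw [show ∀ z : ℂ, ‖z‖ = ‖z‖ from fun _ => rfl]
      · rw [hKsplit]; exact abs3 (p1 0) (p2 0) (p3 0 0)
      · rw [hKsplit]; exact abs3 (p1 1) (p2 1) (p3 0 1)
      · rw [hKsplit']; exact abs3' (p2' 0) (p1' 0) (p3 1 0)
      · rw [hKsplit']; exact abs3' (p2' 1) (p1' 1) (p3 1 1)
    have hgr := norm_le_gronwallBound_of_norm_deriv_right_le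
      (f := Rf) (f' := Dv) (δ := 0) (K := K) (ε := ε) (a := 0) (b := 2*L)
      (fun x _ => hRcont.continuousWithinAt)
      (fun x hx => (hRderiv x hx).hasDerivWithinAt)
      (by rw [hR0]; simp)
      hbound
    have hfin := hgr (2*L) ⟨h2L.le, le_refl _⟩
    have hgb : gronwallBound 0 K ε (2*L - 0) = ε / K * (Real.exp (K*(2*L)) - 1) := by
      rw [gronwallBound_of_K_ne_0 hK.ne']
      simp
    rw [hgb] at hfin
    have hent : ‖Rf (2*L) i j‖ ≤ ε / K * (Real.exp (K*(2*L)) - 1) := by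
      refine le_trans ?_ hfin
      calc ‖Rf (2*L) i j‖ = ‖Rf (2*L) i j‖ := rfl
        _ ≤ ‖Rf (2*L) i‖ := norm_le_pi_norm _ j
        _ ≤ ‖Rf (2*L)‖ := norm_le_pi_norm _ i
    have heq : ε / K * (Real.exp (K*(2*L)) - 1) = (m-l)^2 * C4 := by
      rw [hεdef, hC4def]; ring
    rw [heq] at hent
    exact hent
  rw [hasDerivAt_iff_isLittleO]
  have h1 : (fun m => T m (2*L) i j - T l (2*L) i j - (m - l) • zsS T l (2*L) i j)
      =O[𝓝 l] (fun m => (m - l)^2) := by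
    apply Asymptotics.IsBigO.of_bound C4
    filter_upwards [Metric.ball_mem_nhds l one_pos] with m hm
    have hm' : |m - l| ≤ 1 := by
      rw [Metric.mem_ball, Real.dist_eq] at hm
      linarith
    have hkey := key m hm'
    calc ‖T m (2*L) i j - T l (2*L) i j - (m - l) • zsS T l (2*L) i j‖
        = ‖T m (2*L) i j - T l (2*L) i j
            - ((m - l:ℝ):ℂ) * zsS T l (2*L) i j‖ := by
          rw [Complex.real_smul]
      _ ≤ (m - l)^2 * C4 := hkey
      _ = C4 * ‖(m - l)^2‖ := by
          rw [Real.norm_eq_abs, _root_.abs_of_nonneg (sq_nonneg (m - l))]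
          ring
  have h2 : (fun m : ℝ => (m - l)^2) =o[𝓝 l] (fun m => m - l) := by
    have ha : (fun m : ℝ => m - l) =o[𝓝 l] (fun _ => (1:ℝ)) := by
      rw [Asymptotics.isLittleO_one_iff]
      have ht : Tendsto (fun m : ℝ => m - l) (𝓝 l) (𝓝 (l - l)) :=
        (continuous_id.sub continuous_const).tendsto l
      simpa using ht
    have hb := (Asymptotics.isBigO_refl (fun m : ℝ => m - l) (𝓝 l)).mul_isLittleO ha
    simpa only [pow_two, mul_one] using hb
  exact h1.trans_isLittleO h2
end ZS7

lemma hasDerivAt_cre {f : ℝ → ℂ} {f' : ℂ} {x : ℝ} (h : HasDerivAt f f' x) :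
    HasDerivAt (fun t => (f t).re) f'.re x := by
  have := Complex.reCLM.hasFDerivAt.comp_hasDerivAt x h
  exact this

lemma hasDerivAt_cim {f : ℝ → ℂ} {f' : ℂ} {x : ℝ} (h : HasDerivAt f f' x) :
    HasDerivAt (fun t => (f t).im) f'.im x := by
  have := Complex.imCLM.hasFDerivAt.comp_hasDerivAt x h
  exact this

lemma intervalIntegral_conj {f : ℝ → ℂ} {a b : ℝ} :
    ∫ s in a..b, (starRingEnd ℂ) (f s) = (starRingEnd ℂ) (∫ s in a..b, f s) := by
  rw [intervalIntegral_eq_integral_uIoc, intervalIntegral_eq_integral_uIoc,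
    integral_conj]
  rcases le_or_gt a b with h | h
  · rw [if_pos h]
    simp [Complex.real_smul, map_mul, Complex.conj_ofReal]
  · rw [if_neg (by linarith)]
    simp [Complex.real_smul, map_mul, Complex.conj_ofReal]

section ZS9
variable {L : ℝ} {q : ℝ → ℂ} {T : ℝ → ℝ → Matrix (Fin 2) (Fin 2) ℂ}
variable (hL : 0 < L) (hq : Continuous q)
  (hT0 : ∀ l : ℝ, T l 0 = 1)
  (hTderiv : ∀ (l : ℝ) (x : ℝ) (i j : Fin 2),
      HasDerivAt (fun y => T l y i j) ((zsMatrix q (l : ℂ) x * T l x) i j) x)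
  {Cq : ℝ} (hCq : ∀ x, ‖q x‖ ≤ Cq)
include hL hq hT0 hTderiv hCq

lemma zsCval (l : ℝ) :
    zsC T l (2*L) 0 0 = Complex.I *
        ((∫ s in (0:ℝ)..(2*L), (Complex.normSq (T l s 0 0) + Complex.normSq (T l s 1 0)) : ℝ) : ℂ)
    ∧ zsC T l (2*L) 1 0 = -(2*Complex.I) * (starRingEnd ℂ)
        (∫ s in (0:ℝ)..(2*L), (starRingEnd ℂ) (T l s 0 0) * (starRingEnd ℂ) (T l s 1 0)) := by
  have h2L : (0:ℝ) ≤ 2*L := by linarith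
  have hsym : ∀ s ∈ Icc (0:ℝ) (2*L),
      T l s 1 1 = (starRingEnd ℂ) (T l s 0 0) ∧ T l s 0 1 = (starRingEnd ℂ) (T l s 1 0) :=
    fun s hs => Tsymm hq hT0 hTderiv hCq l hs
  constructor
  · have hcg : EqOn (fun s => zsN T l s 0 0)
        (fun s => Complex.I * ((Complex.normSq (T l s 0 0) + Complex.normSq (T l s 1 0) : ℝ) : ℂ))
        (uIcc 0 (2*L)) := by
      intro s hs
      rw [uIcc_of_le h2L] at hs
      obtain ⟨h1, h2⟩ := hsym s hs
      simp only [zsN, Matrix.cons_val', Matrix.cons_val_zero, Matrix.empty_val',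
        Matrix.cons_val_fin_one, Matrix.of_apply]
      rw [h1, h2, Complex.mul_conj]
      rw [show (starRingEnd ℂ) (T l s 1 0) * T l s 1 0 = T l s 1 0 * (starRingEnd ℂ) (T l s 1 0)
        from mul_comm _ _, Complex.mul_conj]
      push_cast
      ring
    show (∫ s in (0:ℝ)..(2*L), zsN T l s 0 0) = _
    rw [intervalIntegral.integral_congr hcg, intervalIntegral.integral_const_mul,
      intervalIntegral.integral_ofReal]
  · have hcg : EqOn (fun s => zsN T l s 1 0)
        (fun s => -(2*Complex.I) * (starRingEnd ℂ)
          ((starRingEnd ℂ) (T l s 0 0) * (starRingEnd ℂ) (T l s 1 0))) (uIcc 0 (2*L)) := by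
      intro s hs
      simp only [zsN, Matrix.cons_val', Matrix.cons_val_zero, Matrix.cons_val_one,
        Matrix.empty_val', Matrix.cons_val_fin_one, Matrix.of_apply, Matrix.head_cons,
        Matrix.head_fin_const]
      rw [map_mul, Complex.conj_conj, Complex.conj_conj]
      ring
    show (∫ s in (0:ℝ)..(2*L), zsN T l s 1 0) = _
    rw [intervalIntegral.integral_congr hcg, intervalIntegral.integral_const_mul,
      intervalIntegral_conj]

end ZS9

/-- Each closed spectral gap `[a,b]` of the periodic problem (a bounded maximal open
interval of `{λ : |tr T(λ)| > 2}`) contains exactly one zero of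
`F(λ) = T₁₁ + T₂₁ − T₁₂ − T₂₂`, i.e. exactly one point of the auxiliary spectrum. -/
theorem one_aux_point_per_gap
    (L : ℝ) (hL : 0 < L) (q : ℝ → ℂ) (hq : Continuous q)
    (hper : ∀ x, q (x + 2 * L) = q x)
    (T : ℝ → ℝ → Matrix (Fin 2) (Fin 2) ℂ)
    (hT0 : ∀ l : ℝ, T l 0 = 1)
    (hTderiv : ∀ (l : ℝ) (x : ℝ) (i j : Fin 2),
      HasDerivAt (fun y => T l y i j) ((zsMatrix q (l : ℂ) x * T l x) i j) x)
    (a b : ℝ) (hab : a < b)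
    (hgap : Set.Ioo a b ⊆ {l : ℝ | 2 < ‖(T l (2 * L)).trace‖})
    (ha : ¬ 2 < ‖(T a (2 * L)).trace‖)
    (hb : ¬ 2 < ‖(T b (2 * L)).trace‖) :
    ∃! l : ℝ, l ∈ Set.Icc a b ∧
      T l (2 * L) 0 0 + T l (2 * L) 1 0 - T l (2 * L) 0 1 - T l (2 * L) 1 1 = 0 := by

  obtain ⟨Cq, hCq0, hCq⟩ := qbound hL hq hper
  have h2L : (0:ℝ) < 2*L := by linarith
  have hmem2L : (2*L) ∈ Icc (0:ℝ) (2*L) := ⟨h2L.le, le_refl _⟩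
  have hsym : ∀ l : ℝ, T l (2*L) 1 1 = (starRingEnd ℂ) (T l (2*L) 0 0) ∧
      T l (2*L) 0 1 = (starRingEnd ℂ) (T l (2*L) 1 0) :=
    fun l => Tsymm hq hT0 hTderiv hCq l hmem2L
  -- derivative of G = Im(T00 + T10) at 2L
  have hGd : ∀ l : ℝ, HasDerivAt (fun m => (T m (2*L) 0 0).im + (T m (2*L) 1 0).im)
      ((2*(∫ s in (0:ℝ)..(2*L),
            (starRingEnd ℂ) (T l s 0 0) * (starRingEnd ℂ) (T l s 1 0)).im) *
          ((T l (2*L) 0 0).im + (T l (2*L) 1 0).im)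
        + ((∫ s in (0:ℝ)..(2*L), (Complex.normSq (T l s 0 0) + Complex.normSq (T l s 1 0)))
            - 2*(∫ s in (0:ℝ)..(2*L),
              (starRingEnd ℂ) (T l s 0 0) * (starRingEnd ℂ) (T l s 1 0)).re) *
          ((T l (2*L) 0 0).re + (T l (2*L) 1 0).re)) l := by
    intro l
    have hd00 := Tlambda_deriv hL hT0 hTderiv hCq0 hCq l 0 0
    have hd10 := Tlambda_deriv hL hT0 hTderiv hCq0 hCq l 1 0
    have hS00 : zsS T l (2*L) 0 0 = T l (2*L) 0 0 * (Complex.I *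
          ((∫ s in (0:ℝ)..(2*L), (Complex.normSq (T l s 0 0) + Complex.normSq (T l s 1 0)) : ℝ) : ℂ))
        + (starRingEnd ℂ) (T l (2*L) 1 0) * (-(2*Complex.I) * (starRingEnd ℂ)
          (∫ s in (0:ℝ)..(2*L), (starRingEnd ℂ) (T l s 0 0) * (starRingEnd ℂ) (T l s 1 0))) := by
      show T l (2*L) 0 0 * zsC T l (2*L) 0 0 + T l (2*L) 0 1 * zsC T l (2*L) 1 0 = _
      rw [(zsCval hL hq hT0 hTderiv hCq l).1, (zsCval hL hq hT0 hTderiv hCq l).2, (hsym l).2]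
    have hS10 : zsS T l (2*L) 1 0 = T l (2*L) 1 0 * (Complex.I *
          ((∫ s in (0:ℝ)..(2*L), (Complex.normSq (T l s 0 0) + Complex.normSq (T l s 1 0)) : ℝ) : ℂ))
        + (starRingEnd ℂ) (T l (2*L) 0 0) * (-(2*Complex.I) * (starRingEnd ℂ)
          (∫ s in (0:ℝ)..(2*L), (starRingEnd ℂ) (T l s 0 0) * (starRingEnd ℂ) (T l s 1 0))) := by
      show T l (2*L) 1 0 * zsC T l (2*L) 0 0 + T l (2*L) 1 1 * zsC T l (2*L) 1 0 = _
      rw [(zsCval hL hq hT0 hTderiv hCq l).1, (zsCval hL hq hT0 hTderiv hCq l).2, (hsym l).1]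
    have h := (hasDerivAt_cim hd00).fun_add (hasDerivAt_cim hd10)
    rw [hS00, hS10] at h
    refine h.congr_deriv ?_
    symm
    simp only [Complex.add_im, Complex.mul_im, Complex.mul_re, Complex.I_re, Complex.I_im,
      Complex.ofReal_re, Complex.ofReal_im, Complex.conj_re, Complex.conj_im,
      Complex.neg_re, Complex.neg_im, Complex.re_ofNat, Complex.im_ofNat]
    ring
  -- derivative of u = Re T00 at 2L
  have hud : ∀ l : ℝ, HasDerivAt (fun m => (T m (2*L) 0 0).re)
      (-((T l (2*L) 1 0).re * (2*(∫ s in (0:ℝ)..(2*L),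
            (starRingEnd ℂ) (T l s 0 0) * (starRingEnd ℂ) (T l s 1 0)).im))
        - (((∫ s in (0:ℝ)..(2*L), (Complex.normSq (T l s 0 0) + Complex.normSq (T l s 1 0)))
            - 2*(∫ s in (0:ℝ)..(2*L),
              (starRingEnd ℂ) (T l s 0 0) * (starRingEnd ℂ) (T l s 1 0)).re) *
            ((T l (2*L) 0 0).im - (T l (2*L) 1 0).im)
          + ((∫ s in (0:ℝ)..(2*L), (Complex.normSq (T l s 0 0) + Complex.normSq (T l s 1 0)))
            + 2*(∫ s in (0:ℝ)..(2*L),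
              (starRingEnd ℂ) (T l s 0 0) * (starRingEnd ℂ) (T l s 1 0)).re) *
            ((T l (2*L) 0 0).im + (T l (2*L) 1 0).im))/2) l := by
    intro l
    have hd00 := Tlambda_deriv hL hT0 hTderiv hCq0 hCq l 0 0
    have hS00 : zsS T l (2*L) 0 0 = T l (2*L) 0 0 * (Complex.I *
          ((∫ s in (0:ℝ)..(2*L), (Complex.normSq (T l s 0 0) + Complex.normSq (T l s 1 0)) : ℝ) : ℂ))
        + (starRingEnd ℂ) (T l (2*L) 1 0) * (-(2*Complex.I) * (starRingEnd ℂ)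
          (∫ s in (0:ℝ)..(2*L), (starRingEnd ℂ) (T l s 0 0) * (starRingEnd ℂ) (T l s 1 0))) := by
      show T l (2*L) 0 0 * zsC T l (2*L) 0 0 + T l (2*L) 0 1 * zsC T l (2*L) 1 0 = _
      rw [(zsCval hL hq hT0 hTderiv hCq l).1, (zsCval hL hq hT0 hTderiv hCq l).2, (hsym l).2]
    have h := hasDerivAt_cre hd00
    rw [hS00] at h
    convert h using 1
    simp only [Complex.add_re, Complex.mul_im, Complex.mul_re, Complex.I_re, Complex.I_im,
      Complex.ofReal_re, Complex.ofReal_im, Complex.conj_re, Complex.conj_im,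
      Complex.neg_re, Complex.neg_im, Complex.re_ofNat, Complex.im_ofNat]
    ring
  -- algebraic identity ΦΨ + GH = 1 (from det = 1 and symmetry)
  have h4 : ∀ l : ℝ, ((T l (2*L) 0 0).re - (T l (2*L) 1 0).re) *
        ((T l (2*L) 0 0).re + (T l (2*L) 1 0).re)
      + ((T l (2*L) 0 0).im + (T l (2*L) 1 0).im) *
        ((T l (2*L) 0 0).im - (T l (2*L) 1 0).im) = 1 := by
    intro l
    have hdet := Tdet hT0 hTderiv l hmem2L
    rw [(hsym l).1, (hsym l).2] at hdet
    have hre := congrArg Complex.re hdet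
    simp only [Complex.sub_re, Complex.mul_re, Complex.conj_re, Complex.conj_im,
      Complex.one_re] at hre
    linear_combination hre
  -- positivity of P, Q and R² < PQ
  have hPQR : ∀ l : ℝ,
      0 < (∫ s in (0:ℝ)..(2*L), (Complex.normSq (T l s 0 0) + Complex.normSq (T l s 1 0)))
          - 2*(∫ s in (0:ℝ)..(2*L),
            (starRingEnd ℂ) (T l s 0 0) * (starRingEnd ℂ) (T l s 1 0)).re
      ∧ 0 < (∫ s in (0:ℝ)..(2*L), (Complex.normSq (T l s 0 0) + Complex.normSq (T l s 1 0)))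
          + 2*(∫ s in (0:ℝ)..(2*L),
            (starRingEnd ℂ) (T l s 0 0) * (starRingEnd ℂ) (T l s 1 0)).re
      ∧ (2*(∫ s in (0:ℝ)..(2*L),
            (starRingEnd ℂ) (T l s 0 0) * (starRingEnd ℂ) (T l s 1 0)).im)^2 <
        ((∫ s in (0:ℝ)..(2*L), (Complex.normSq (T l s 0 0) + Complex.normSq (T l s 1 0)))
          - 2*(∫ s in (0:ℝ)..(2*L),
            (starRingEnd ℂ) (T l s 0 0) * (starRingEnd ℂ) (T l s 1 0)).re) *
        ((∫ s in (0:ℝ)..(2*L), (Complex.normSq (T l s 0 0) + Complex.normSq (T l s 1 0)))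
          + 2*(∫ s in (0:ℝ)..(2*L),
            (starRingEnd ℂ) (T l s 0 0) * (starRingEnd ℂ) (T l s 1 0)).re) := by
    intro l
    have hc00 := Tcont hTderiv l 0 0
    have hc10 := Tcont hTderiv l 1 0
    have hcontA : Continuous fun s => Complex.normSq (T l s 0 0) + Complex.normSq (T l s 1 0) :=
      (Complex.continuous_normSq.comp hc00).add (Complex.continuous_normSq.comp hc10)
    have hcontab : Continuous fun s => ‖T l s 0 0‖ * ‖T l s 1 0‖ :=
      (continuous_norm.comp hc00).mul (continuous_norm.comp hc10)
    have hcontBc : Continuous fun s => (starRingEnd ℂ) (T l s 0 0) * (starRingEnd ℂ) (T l s 1 0) :=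
      ((Complex.continuous_conj.comp hc00).mul (Complex.continuous_conj.comp hc10))
    -- pointwise determinant
    have hdets : ∀ s ∈ Icc (0:ℝ) (2*L),
        Complex.normSq (T l s 0 0) - Complex.normSq (T l s 1 0) = 1 := by
      intro s hs
      have hdet := Tdet hT0 hTderiv l hs
      obtain ⟨h1, h2⟩ := Tsymm hq hT0 hTderiv hCq l hs
      rw [h1, h2] at hdet
      have hre := congrArg Complex.re hdet
      simp only [Complex.sub_re, Complex.mul_re, Complex.conj_re, Complex.conj_im,
        Complex.one_re] at hre
      simp only [Complex.normSq_apply]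
      linear_combination hre
    -- strict positivity of the square-difference integral
    have hsqpos : 0 < ∫ s in (0:ℝ)..(2*L),
        (‖T l s 0 0‖ - ‖T l s 1 0‖)^2 := by
      apply intervalIntegral.intervalIntegral_pos_of_pos_on
      · exact (((continuous_norm.comp hc00).sub
          (continuous_norm.comp hc10)).pow 2).intervalIntegrable _ _
      · intro s hs
        have hne : ‖T l s 0 0‖ ≠ ‖T l s 1 0‖ := by
          intro he
          have := hdets s (Ioo_subset_Icc_self hs)
          rw [← Complex.sq_norm, ← Complex.sq_norm, he] at this
          simp at this
        exact lt_of_le_of_ne (sq_nonneg _) (Ne.symm (pow_ne_zero 2 (sub_ne_zero.2 hne)))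
      · exact h2L
    -- split the square
    have hsplit : (∫ s in (0:ℝ)..(2*L),
          (‖T l s 0 0‖ - ‖T l s 1 0‖)^2)
        = (∫ s in (0:ℝ)..(2*L), (Complex.normSq (T l s 0 0) + Complex.normSq (T l s 1 0)))
          - 2 * ∫ s in (0:ℝ)..(2*L), ‖T l s 0 0‖ * ‖T l s 1 0‖ := by
      have hpt : ∀ s : ℝ, (‖T l s 0 0‖ - ‖T l s 1 0‖)^2
          = (Complex.normSq (T l s 0 0) + Complex.normSq (T l s 1 0))
            - 2 * (‖T l s 0 0‖ * ‖T l s 1 0‖) := by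
        intro s
        rw [← Complex.sq_norm, ← Complex.sq_norm]
        ring
      rw [intervalIntegral.integral_congr (fun s _ => hpt s),
        intervalIntegral.integral_sub (hcontA.intervalIntegrable _ _)
          ((show Continuous fun s => 2 * (‖T l s 0 0‖ * ‖T l s 1 0‖) from continuous_const.mul hcontab).intervalIntegrable _ _),
        intervalIntegral.integral_const_mul]
    -- |B| ≤ ∫ |T00||T10|
    have hBle : ‖∫ s in (0:ℝ)..(2*L),
          (starRingEnd ℂ) (T l s 0 0) * (starRingEnd ℂ) (T l s 1 0)‖
        ≤ ∫ s in (0:ℝ)..(2*L), ‖T l s 0 0‖ * ‖T l s 1 0‖ := by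
      have hn := intervalIntegral.norm_integral_le_integral_norm (μ := MeasureTheory.volume)
        (f := fun s => (starRingEnd ℂ) (T l s 0 0) * (starRingEnd ℂ) (T l s 1 0)) h2L.le
      refine le_trans hn (le_of_eq ?_)
      apply intervalIntegral.integral_congr
      intro s _
      simp [map_mul, Complex.norm_conj]
    set A1 := (∫ s in (0:ℝ)..(2*L), (Complex.normSq (T l s 0 0) + Complex.normSq (T l s 1 0)))
    set Bv := (∫ s in (0:ℝ)..(2*L),
      (starRingEnd ℂ) (T l s 0 0) * (starRingEnd ℂ) (T l s 1 0))
    have hkey : 2 * ‖Bv‖ < A1 := by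
      have := hsqpos
      rw [hsplit] at this
      linarith
    have habs0 : 0 ≤ ‖Bv‖ := norm_nonneg _
    have hre := Complex.abs_re_le_norm Bv
    have him := Complex.abs_im_le_norm Bv
    have hsq : ‖Bv‖ ^ 2 = Bv.re*Bv.re + Bv.im*Bv.im := by
      rw [Complex.sq_norm, Complex.normSq_apply]
    refine ⟨by cases abs_le.1 hre; linarith, by cases abs_le.1 hre; linarith, ?_⟩
    nlinarith [hkey, habs0, hsq, abs_le.1 hre, abs_le.1 him, sq_nonneg Bv.re, sq_nonneg Bv.im]
  -- gap hypotheses in terms of u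
  have htr : ∀ l : ℝ, ‖(T l (2*L)).trace‖ = 2 * |(T l (2*L) 0 0).re| := by
    intro l
    rw [Matrix.trace_fin_two, (hsym l).1, Complex.add_conj, Complex.norm_real, Real.norm_eq_abs, abs_mul, _root_.abs_two]
  have h2Leq : (2:ℝ) * L = 2 * L := rfl
  have hgap' : ∀ l ∈ Ioo a b, 1 < |(T l (2*L) 0 0).re| := by
    intro l hl
    have h := hgap hl
    rw [Set.mem_setOf_eq, htr l] at h
    linarith
  have hua : |(T a (2*L) 0 0).re| ≤ 1 := by
    rw [not_lt, htr a] at ha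
    linarith
  have hub : |(T b (2*L) 0 0).re| ≤ 1 := by
    rw [not_lt, htr b] at hb
    linarith
  have habstract := abstract_gap (a := a) (b := b)
    (G := fun m => (T m (2*L) 0 0).im + (T m (2*L) 1 0).im)
    (H := fun m => (T m (2*L) 0 0).im - (T m (2*L) 1 0).im)
    (u := fun m => (T m (2*L) 0 0).re)
    (p := fun m => (T m (2*L) 1 0).re)
    (Φ := fun m => (T m (2*L) 0 0).re - (T m (2*L) 1 0).re)
    (Ψ := fun m => (T m (2*L) 0 0).re + (T m (2*L) 1 0).re)
    (P := fun m => (∫ s in (0:ℝ)..(2*L), (Complex.normSq (T m s 0 0) + Complex.normSq (T m s 1 0)))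
      - 2*(∫ s in (0:ℝ)..(2*L), (starRingEnd ℂ) (T m s 0 0) * (starRingEnd ℂ) (T m s 1 0)).re)
    (Q := fun m => (∫ s in (0:ℝ)..(2*L), (Complex.normSq (T m s 0 0) + Complex.normSq (T m s 1 0)))
      + 2*(∫ s in (0:ℝ)..(2*L), (starRingEnd ℂ) (T m s 0 0) * (starRingEnd ℂ) (T m s 1 0)).re)
    (R := fun m => 2*(∫ s in (0:ℝ)..(2*L),
      (starRingEnd ℂ) (T m s 0 0) * (starRingEnd ℂ) (T m s 1 0)).im)
    hab hGd hud h4 (fun l => (hPQR l).1) (fun l => (hPQR l).2.1) (fun l => (hPQR l).2.2)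
    (fun l => by ring) (fun l => by ring) hgap' hua hub
  obtain ⟨l0, ⟨hl0m, hl0G⟩, huni⟩ := habstract
  have hFG : ∀ l : ℝ, (T l (2*L) 0 0 + T l (2*L) 1 0 - T l (2*L) 0 1 - T l (2*L) 1 1 = 0) ↔
      ((T l (2*L) 0 0).im + (T l (2*L) 1 0).im = 0) := by
    intro l
    rw [(hsym l).1, (hsym l).2]
    have he : T l (2*L) 0 0 + T l (2*L) 1 0 - (starRingEnd ℂ) (T l (2*L) 1 0)
        - (starRingEnd ℂ) (T l (2*L) 0 0)
        = ((2*((T l (2*L) 0 0).im + (T l (2*L) 1 0).im) : ℝ) : ℂ) * Complex.I := by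
      have e1 := Complex.sub_conj (T l (2*L) 0 0)
      have e2 := Complex.sub_conj (T l (2*L) 1 0)
      calc T l (2*L) 0 0 + T l (2*L) 1 0 - (starRingEnd ℂ) (T l (2*L) 1 0)
            - (starRingEnd ℂ) (T l (2*L) 0 0)
          = (T l (2*L) 0 0 - (starRingEnd ℂ) (T l (2*L) 0 0))
            + (T l (2*L) 1 0 - (starRingEnd ℂ) (T l (2*L) 1 0)) := by ring
        _ = ((2*(T l (2*L) 0 0).im : ℝ) : ℂ) * Complex.I
            + ((2*(T l (2*L) 1 0).im : ℝ) : ℂ) * Complex.I := by rw [e1, e2]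
        _ = _ := by push_cast; ring
    rw [he]
    constructor
    · intro h0
      rcases mul_eq_zero.1 h0 with h | h
      · have := Complex.ofReal_eq_zero.1 h
        linarith
      · exact absurd h Complex.I_ne_zero
    · intro h0
      rw [h0]
      simp
  exact ⟨l0, ⟨hl0m, (hFG l0).2 hl0G⟩, fun y hy => huni y ⟨hy.1, (hFG y).1 hy.2⟩⟩
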